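/- Let Ŷ_{p0} be the second generation space (any τ, F(n,i) arbitrary positive). Then the centered maximal operator M^c is of strong type (1,1) with constant 5: ‖M^c f‖_1 ≤ 5 ‖f‖_1 for all f ∈ ℓ^1(Y_τ, μ). -/

import Mathlib

open scoped ENNReal Classical
open Filter Set

/-- The point set of a second generation space: roots `y_n`, middle points
`y_{n,i}` and top points `y'_{n,i}` (`i` among `τ n` per branch). -/
abbrev YPt (τ : ℕ → ℕ) := ℕ ⊕ ((Σ n : ℕ, Fin (τ n)) ⊕ (Σ n : ℕ, Fin (τ n)))

namespace SecondGen

/-- The root `y_n`. -/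
def root (τ : ℕ → ℕ) (n : ℕ) : YPt τ := Sum.inl n

/-- The middle point `y_{n,i}`. -/
def mid (τ : ℕ → ℕ) (n : ℕ) (i : Fin (τ n)) : YPt τ := Sum.inr (Sum.inl ⟨n, i⟩)

/-- The top point `y'_{n,i}`. -/
def top (τ : ℕ → ℕ) (n : ℕ) (i : Fin (τ n)) : YPt τ := Sum.inr (Sum.inr ⟨n, i⟩)

/-- The triple `{y_n} ∪ T_{n,i} = {y_n, y_{n,i}, y'_{n,i}}`. -/
def triple (τ : ℕ → ℕ) (n : ℕ) (i : Fin (τ n)) : Set (YPt τ) :=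
  {root τ n, mid τ n i, top τ n i}

/-- The pair `T_{n,i} = {y_{n,i}, y'_{n,i}}`. -/
def pairB (τ : ℕ → ℕ) (n : ℕ) (i : Fin (τ n)) : Set (YPt τ) :=
  {mid τ n i, top τ n i}

/-- The lower part of a branch, `T_n \ T_n' = {y_n, y_{n,1}, …, y_{n,τ_n}}`. -/
def low (τ : ℕ → ℕ) (n : ℕ) : Set (YPt τ) :=
  {x | x = root τ n ∨ ∃ i, x = mid τ n i}

/-- The full branch `T_n`. -/
def branch (τ : ℕ → ℕ) (n : ℕ) : Set (YPt τ) :=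
  {x | x = root τ n ∨ (∃ i, x = mid τ n i) ∨ ∃ i, x = top τ n i}

/-- The collection of all open balls of `Y_τ`. -/
def balls (τ : ℕ → ℕ) : Set (Set (YPt τ)) :=
  {B | (∃ x, B = {x}) ∨ (∃ n i, B = triple τ n i) ∨ (∃ n i, B = pairB τ n i) ∨
       (∃ n, B = low τ n) ∨ B = Set.univ}

/-- The ball `B(y, 3/2)` centered at `y`. -/
def cball (τ : ℕ → ℕ) : YPt τ → Set (YPt τ)
  | Sum.inl n => low τ n
  | Sum.inr (Sum.inl ⟨n, i⟩) => triple τ n i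
  | Sum.inr (Sum.inr ⟨n, i⟩) => pairB τ n i

/-- The weights: `μ({y_n}) = d n`, `μ({y_{n,i}}) = d n / τ n`,
`μ({y'_{n,i}}) = d n * F n i`. -/
noncomputable def weight (τ : ℕ → ℕ) (d : ℕ → ℝ≥0∞)
    (F : (n : ℕ) → Fin (τ n) → ℝ≥0∞) : YPt τ → ℝ≥0∞
  | Sum.inl n => d n
  | Sum.inr (Sum.inl ⟨n, _⟩) => d n / (τ n : ℝ≥0∞)
  | Sum.inr (Sum.inr ⟨n, i⟩) => d n * F n i

/-- Measure of a set. -/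
noncomputable def mass {τ : ℕ → ℕ} (w : YPt τ → ℝ≥0∞) (s : Set (YPt τ)) : ℝ≥0∞ :=
  ∑' x : s, w x.1

/-- Average of `f` over `s`. -/
noncomputable def avg {τ : ℕ → ℕ} (w f : YPt τ → ℝ≥0∞) (s : Set (YPt τ)) : ℝ≥0∞ :=
  (∑' x : s, f x.1 * w x.1) / mass w s

/-- The centered Hardy–Littlewood maximal operator of `Y_τ`. -/
noncomputable def Mc {τ : ℕ → ℕ} (w f : YPt τ → ℝ≥0∞) (x : YPt τ) : ℝ≥0∞ :=
  avg w f {x} ⊔ avg w f (cball τ x) ⊔ avg w f Set.univ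

/-- The non-centered Hardy–Littlewood maximal operator of `Y_τ`. -/
noncomputable def Mnc {τ : ℕ → ℕ} (w f : YPt τ → ℝ≥0∞) (x : YPt τ) : ℝ≥0∞ :=
  ⨆ (B : Set (YPt τ)) (_ : B ∈ balls τ) (_ : x ∈ B), avg w f B

/-- `‖f‖_p^p`. -/
noncomputable def lpp {τ : ℕ → ℕ} (w : YPt τ → ℝ≥0∞) (p : ℝ) (f : YPt τ → ℝ≥0∞) : ℝ≥0∞ :=
  ∑' x, f x ^ p * w x

/-- Strong type `(p,p)` (on the level of `p`-th powers). -/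
def strongT {τ : ℕ → ℕ} (w : YPt τ → ℝ≥0∞)
    (T : (YPt τ → ℝ≥0∞) → YPt τ → ℝ≥0∞) (p : ℝ) : Prop :=
  ∃ C : ℝ≥0∞, C ≠ ∞ ∧ ∀ f, lpp w p (T f) ≤ C * lpp w p f

/-- Weak type `(p,p)` (on the level of `p`-th powers). -/
def weakT {τ : ℕ → ℕ} (w : YPt τ → ℝ≥0∞)
    (T : (YPt τ → ℝ≥0∞) → YPt τ → ℝ≥0∞) (p : ℝ) : Prop :=
  ∃ C : ℝ≥0∞, C ≠ ∞ ∧ ∀ f (l : ℝ≥0∞), l ^ p * mass w {x | l < T f x} ≤ C * lpp w p f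

/-- `‖g‖_{p,∞}^p`. -/
noncomputable def wnormP {τ : ℕ → ℕ} (w : YPt τ → ℝ≥0∞) (p : ℝ) (g : YPt τ → ℝ≥0∞) : ℝ≥0∞ :=
  ⨆ l : ℝ≥0∞, l ^ p * mass w {x | l < g x}

/-- The Dirac function `δ_{y_n}`. -/
noncomputable def dirac (τ : ℕ → ℕ) (n : ℕ) : YPt τ → ℝ≥0∞ :=
  fun x => if x = root τ n then 1 else 0

end SecondGen

open SecondGen

namespace SGAux

lemma etsum_sum_type {α β : Type*} (f : α ⊕ β → ℝ≥0∞) :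
    ∑' x, f x = ∑' a, f (Sum.inl a) + ∑' b, f (Sum.inr b) := by
  rw [← tsum_range f Sum.inl_injective, ← tsum_range f Sum.inr_injective,
    tsum_subtype, tsum_subtype, ← ENNReal.tsum_add]
  refine tsum_congr fun x => ?_
  cases x <;> simp [Set.indicator]

lemma ind_union_le {α : Type*} (s t : Set α) (g : α → ℝ≥0∞) (x : α) :
    (s ∪ t).indicator g x ≤ s.indicator g x + t.indicator g x := by
  by_cases hs : x ∈ s
  · rw [Set.indicator_of_mem (Set.mem_union_left _ hs), Set.indicator_of_mem hs]
    exact le_self_add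
  by_cases ht : x ∈ t
  · rw [Set.indicator_of_mem (Set.mem_union_right _ ht), Set.indicator_of_mem ht]
    exact le_add_self
  · rw [Set.indicator_of_notMem (by simp [hs, ht])]
    exact zero_le

lemma tsum_union_le {α : Type*} (s t : Set α) (g : α → ℝ≥0∞) :
    ∑' x : ↑(s ∪ t), g x ≤ (∑' x : s, g x) + ∑' x : t, g x := by
  rw [tsum_subtype, tsum_subtype, tsum_subtype, ← ENNReal.tsum_add]
  exact ENNReal.tsum_le_tsum fun x => ind_union_le s t g x

end SGAux

/-- in any second generation space (any `τ ≥ 1`, any positive finite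
`F`, weights `μ({y_n}) = d n`, `μ({y_{n,i}}) = d n / τ n`, `μ({y'_{n,i}}) = d n F n i`,
branch masses halving, `d 0 = 1`), the centered maximal operator is of strong type
`(1,1)` with constant `5`: `‖M^c f‖₁ ≤ 5 ‖f‖₁`. -/
theorem Yhat_cen_strong11 (τ : ℕ → ℕ) (hτ : ∀ n, 1 ≤ τ n)
    (d : ℕ → ℝ≥0∞) (hd : ∀ n, 0 < d n ∧ d n ≠ ∞) (hd1 : d 0 = 1)
    (F : (n : ℕ) → Fin (τ n) → ℝ≥0∞) (hF : ∀ n i, 0 < F n i ∧ F n i ≠ ∞)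
    (hhalf : ∀ n, mass (weight τ d F) (branch τ (n + 1))
      = mass (weight τ d F) (branch τ n) / 2) :
    ∀ f : YPt τ → ℝ≥0∞,
      lpp (weight τ d F) 1 (Mc (weight τ d F) f) ≤ 5 * lpp (weight τ d F) 1 f := by
  intro f
  set w := weight τ d F with hw
  set g : YPt τ → ℝ≥0∞ := fun y => f y * w y with hg
  set S := ∑' y, g y with hS
  -- generic bound: avg over s times weight of a point of s is at most the integral over s
  have havg : ∀ (s : Set (YPt τ)) (x : YPt τ), x ∈ s →
      avg w f s * w x ≤ ∑' y : s, g y.1 := by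
    intro s x hx
    calc avg w f s * w x ≤ avg w f s * mass w s :=
          mul_le_mul_right (ENNReal.le_tsum (⟨x, hx⟩ : s)) _
      _ = mass w s * ((∑' y : s, g y.1) / mass w s) := mul_comm _ _
      _ ≤ _ := ENNReal.mul_div_le
  -- splitting of sums over YPt
  have hsplit : ∀ h : YPt τ → ℝ≥0∞, ∑' x, h x =
      (∑' n, h (root τ n)) + ((∑' n, ∑' i, h (mid τ n i)) + (∑' n, ∑' i, h (top τ n i))) := by
    intro h
    have e3 : ∑' (p : Σ n, Fin (τ n)), h (Sum.inr (Sum.inl p) : YPt τ)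
        = ∑' n, ∑' i, h (mid τ n i) :=
      (tsum_congr fun p => by rcases p with ⟨n, i⟩; rfl).trans
        (ENNReal.tsum_sigma fun n i => h (mid τ n i))
    have e4 : ∑' (p : Σ n, Fin (τ n)), h (Sum.inr (Sum.inr p) : YPt τ)
        = ∑' n, ∑' i, h (top τ n i) :=
      (tsum_congr fun p => by rcases p with ⟨n, i⟩; rfl).trans
        (ENNReal.tsum_sigma fun n i => h (top τ n i))
    calc ∑' x, h x = (∑' n, h (Sum.inl n)) + ∑' q, h (Sum.inr q) := SGAux.etsum_sum_type h
      _ = (∑' n, h (Sum.inl n)) + ((∑' p, h (Sum.inr (Sum.inl p)))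
            + ∑' p, h (Sum.inr (Sum.inr p))) := by
          rw [SGAux.etsum_sum_type (fun q => h (Sum.inr q))]
      _ = _ := by rw [e3, e4]; rfl
  have hτ1 : ∀ n, (1 : ℝ≥0∞) ≤ (τ n : ℝ≥0∞) := fun n => by exact_mod_cast hτ n
  have hdivτ : ∀ n (a : ℝ≥0∞), a / (τ n : ℝ≥0∞) ≤ a := fun n a =>
    (ENNReal.div_le_div le_rfl (hτ1 n)).trans (by rw [div_one])
  -- the three pieces of S
  set R := ∑' n, g (root τ n) with hR
  set M := ∑' n, ∑' i, g (mid τ n i) with hM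
  set T := ∑' n, ∑' i, g (top τ n i) with hT
  have hSRMT : S = R + (M + T) := hsplit g
  -- singleton term
  have hT1 : ∑' x, avg w f {x} * w x ≤ S := by
    refine ENNReal.tsum_le_tsum fun x => ?_
    have h1 : avg w f {x} = g x / w x := by
      have hnum : (∑' y : ({x} : Set (YPt τ)), f y.1 * w y.1) = g x :=
        tsum_singleton x (fun z => f z * w z)
      have hden : mass w ({x} : Set (YPt τ)) = w x := tsum_singleton x w
      rw [avg, hnum, hden]
    rw [h1, mul_comm]
    exact ENNReal.mul_div_le
  -- universe term
  have hT3 : ∑' x, avg w f Set.univ * w x ≤ S := by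
    have hMu : mass w (Set.univ : Set (YPt τ)) = ∑' x, w x := tsum_univ w
    calc ∑' x, avg w f Set.univ * w x = avg w f Set.univ * ∑' x, w x :=
          ENNReal.tsum_mul_left
      _ = avg w f Set.univ * mass w Set.univ := by rw [hMu]
      _ = mass w Set.univ * ((∑' y : (Set.univ : Set (YPt τ)), g y.1) / mass w Set.univ) :=
          mul_comm _ _
      _ ≤ ∑' y : (Set.univ : Set (YPt τ)), g y.1 := ENNReal.mul_div_le
      _ = S := tsum_univ g
  -- root (low-ball) term
  have hA : ∑' n, avg w f (low τ n) * d n ≤ R + M := by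
    have hb : ∀ n, avg w f (low τ n) * d n ≤ g (root τ n) + ∑' i, g (mid τ n i) := by
      intro n
      have hmem : root τ n ∈ low τ n := Or.inl rfl
      have h1 : avg w f (low τ n) * d n ≤ ∑' y : low τ n, g y.1 := havg _ (root τ n) hmem
      have hlow : low τ n = {root τ n} ∪ Set.range (mid τ n) := by
        ext x
        simp [low, Set.mem_range, eq_comm]
      have hmidinj : Function.Injective (mid τ n) := by
        intro i j hij
        simpa [mid] using hij
      refine h1.trans ?_
      calc (∑' y : low τ n, g y.1)
          = ∑' y : ↑({root τ n} ∪ Set.range (mid τ n)), g y.1 := by rw [hlow]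
        _ ≤ (∑' y : ({root τ n} : Set (YPt τ)), g y.1)
            + ∑' y : ↑(Set.range (mid τ n)), g y.1 := SGAux.tsum_union_le _ _ _
        _ = g (root τ n) + ∑' i, g (mid τ n i) := by
            rw [tsum_singleton (root τ n) g, tsum_range g hmidinj]
    calc ∑' n, avg w f (low τ n) * d n
        ≤ ∑' n, (g (root τ n) + ∑' i, g (mid τ n i)) := ENNReal.tsum_le_tsum hb
      _ = R + M := ENNReal.tsum_add
  -- mid (triple-ball) term
  have hB : ∑' n, ∑' i, avg w f (triple τ n i) * (d n / (τ n : ℝ≥0∞)) ≤ R + (M + T) := by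
    have hb : ∀ n i, avg w f (triple τ n i) * (d n / (τ n : ℝ≥0∞))
        ≤ g (root τ n) / (τ n : ℝ≥0∞) + (g (mid τ n i) + g (top τ n i)) := by
      intro n i
      have hmem : root τ n ∈ triple τ n i := Set.mem_insert _ _
      set St := ∑' y : triple τ n i, g y.1 with hSt
      have h1 : avg w f (triple τ n i) ≤ St / d n :=
        ENNReal.div_le_div le_rfl (ENNReal.le_tsum (⟨root τ n, hmem⟩ : triple τ n i))
      have h2 : St / d n * (d n / (τ n : ℝ≥0∞)) = St / (τ n : ℝ≥0∞) := by
        rw [← mul_div_assoc, ENNReal.div_mul_cancel (hd n).1.ne' (hd n).2]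
      have htr : triple τ n i = {root τ n} ∪ ({mid τ n i} ∪ {top τ n i}) := by
        simp only [triple, Set.insert_eq]
      have h3 : St ≤ g (root τ n) + (g (mid τ n i) + g (top τ n i)) := by
        calc St = ∑' y : (({root τ n} ∪ ({mid τ n i} ∪ {top τ n i})) : Set (YPt τ)), g y.1 := by rw [hSt, htr]
          _ ≤ (∑' y : ({root τ n} : Set (YPt τ)), g y.1)
              + ∑' y : ↑(({mid τ n i} : Set (YPt τ)) ∪ {top τ n i}), g y.1 :=
            SGAux.tsum_union_le _ _ _
          _ ≤ (∑' y : ({root τ n} : Set (YPt τ)), g y.1)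
              + ((∑' y : ({mid τ n i} : Set (YPt τ)), g y.1)
                + ∑' y : ({top τ n i} : Set (YPt τ)), g y.1) :=
            add_le_add le_rfl (SGAux.tsum_union_le _ _ _)
          _ = g (root τ n) + (g (mid τ n i) + g (top τ n i)) := by
            rw [tsum_singleton (root τ n) g, tsum_singleton (mid τ n i) g,
              tsum_singleton (top τ n i) g]
      calc avg w f (triple τ n i) * (d n / (τ n : ℝ≥0∞))
          ≤ St / d n * (d n / (τ n : ℝ≥0∞)) := mul_le_mul_left h1 _
        _ = St / (τ n : ℝ≥0∞) := h2
        _ ≤ (g (root τ n) + (g (mid τ n i) + g (top τ n i))) / (τ n : ℝ≥0∞) :=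
            ENNReal.div_le_div h3 le_rfl
        _ = g (root τ n) / (τ n : ℝ≥0∞)
            + (g (mid τ n i) + g (top τ n i)) / (τ n : ℝ≥0∞) := by
            rw [div_eq_mul_inv, div_eq_mul_inv, div_eq_mul_inv, add_mul]
        _ ≤ g (root τ n) / (τ n : ℝ≥0∞) + (g (mid τ n i) + g (top τ n i)) :=
            add_le_add le_rfl (hdivτ n _)
    have hbn : ∀ n, ∑' i, avg w f (triple τ n i) * (d n / (τ n : ℝ≥0∞))
        ≤ g (root τ n) + ((∑' i, g (mid τ n i)) + ∑' i, g (top τ n i)) := by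
      intro n
      calc ∑' i, avg w f (triple τ n i) * (d n / (τ n : ℝ≥0∞))
          ≤ ∑' i : Fin (τ n), (g (root τ n) / (τ n : ℝ≥0∞)
              + (g (mid τ n i) + g (top τ n i))) := ENNReal.tsum_le_tsum (hb n)
        _ = (∑' _i : Fin (τ n), g (root τ n) / (τ n : ℝ≥0∞))
              + ∑' i : Fin (τ n), (g (mid τ n i) + g (top τ n i)) := ENNReal.tsum_add
        _ ≤ g (root τ n) + ((∑' i, g (mid τ n i)) + ∑' i, g (top τ n i)) := by
            refine add_le_add ?_ (le_of_eq ENNReal.tsum_add)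
            rw [tsum_fintype, Finset.sum_const, Finset.card_univ, Fintype.card_fin,
              nsmul_eq_mul]
            exact ENNReal.mul_div_le
    calc ∑' n, ∑' i, avg w f (triple τ n i) * (d n / (τ n : ℝ≥0∞))
        ≤ ∑' n, (g (root τ n) + ((∑' i, g (mid τ n i)) + ∑' i, g (top τ n i))) :=
          ENNReal.tsum_le_tsum hbn
      _ = R + (M + T) := by rw [ENNReal.tsum_add]; congr 1; exact ENNReal.tsum_add
  -- top (pair-ball) term
  have hC : ∑' n, ∑' i, avg w f (pairB τ n i) * (d n * F n i) ≤ M + T := by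
    have hb : ∀ n i, avg w f (pairB τ n i) * (d n * F n i)
        ≤ g (mid τ n i) + g (top τ n i) := by
      intro n i
      have hmem : top τ n i ∈ pairB τ n i := Set.mem_insert_iff.2 (Or.inr rfl)
      have h1 : avg w f (pairB τ n i) * (d n * F n i) ≤ ∑' y : pairB τ n i, g y.1 :=
        havg _ (top τ n i) hmem
      have hpr : pairB τ n i = ({mid τ n i} : Set (YPt τ)) ∪ {top τ n i} := by
        simp only [pairB, Set.insert_eq]
      refine h1.trans ?_
      calc (∑' y : pairB τ n i, g y.1)
          = ∑' y : ↑(({mid τ n i} : Set (YPt τ)) ∪ {top τ n i}), g y.1 := by rw [hpr]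
        _ ≤ (∑' y : ({mid τ n i} : Set (YPt τ)), g y.1)
            + ∑' y : ({top τ n i} : Set (YPt τ)), g y.1 := SGAux.tsum_union_le _ _ _
        _ = g (mid τ n i) + g (top τ n i) := by
            rw [tsum_singleton (mid τ n i) g, tsum_singleton (top τ n i) g]
    calc ∑' n, ∑' i, avg w f (pairB τ n i) * (d n * F n i)
        ≤ ∑' n, ∑' i : Fin (τ n), (g (mid τ n i) + g (top τ n i)) :=
          ENNReal.tsum_le_tsum fun n => ENNReal.tsum_le_tsum (hb n)
      _ = M + T := by
          rw [← ENNReal.tsum_add]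
          exact tsum_congr fun n => ENNReal.tsum_add
  -- the cball term
  have hT2 : ∑' x, avg w f (cball τ x) * w x ≤ (R + M) + ((R + (M + T)) + (M + T)) := by
    calc ∑' x, avg w f (cball τ x) * w x
        = (∑' n, avg w f (low τ n) * d n)
          + ((∑' n, ∑' i, avg w f (triple τ n i) * (d n / (τ n : ℝ≥0∞)))
            + ∑' n, ∑' i, avg w f (pairB τ n i) * (d n * F n i)) :=
          hsplit (fun x => avg w f (cball τ x) * w x)
      _ ≤ _ := add_le_add hA (add_le_add hB hC)
  -- assemble
  have hlpp : lpp w 1 f = S := tsum_congr fun x => by rw [ENNReal.rpow_one]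
  have hMc : lpp w 1 (Mc w f) ≤ (∑' x, avg w f {x} * w x)
      + ((∑' x, avg w f (cball τ x) * w x) + ∑' x, avg w f Set.univ * w x) := by
    calc lpp w 1 (Mc w f) = ∑' x, Mc w f x * w x :=
          tsum_congr fun x => by rw [ENNReal.rpow_one]
      _ ≤ ∑' x, (avg w f {x} * w x
            + (avg w f (cball τ x) * w x + avg w f Set.univ * w x)) := by
          refine ENNReal.tsum_le_tsum fun x => ?_
          rw [← add_mul, ← add_mul]
          refine mul_le_mul_left ?_ _
          exact sup_le (sup_le le_self_add (le_self_add.trans le_add_self))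
            (le_add_self.trans le_add_self)
      _ = _ := by rw [ENNReal.tsum_add]; congr 1; exact ENNReal.tsum_add
  have hfinal : lpp w 1 (Mc w f) ≤ S + (((R + M) + ((R + (M + T)) + (M + T))) + S) :=
    hMc.trans (add_le_add hT1 (add_le_add hT2 hT3))
  rw [hlpp]
  refine hfinal.trans ?_
  have hRMT : R + M ≤ S := by rw [hSRMT]; exact add_le_add le_rfl le_self_add
  have hMT : M + T ≤ S := by rw [hSRMT]; exact le_add_self
  calc S + (((R + M) + ((R + (M + T)) + (M + T))) + S)
      ≤ S + ((S + (S + S)) + S) := by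
        refine add_le_add le_rfl (add_le_add (add_le_add hRMT (add_le_add (le_of_eq hSRMT.symm) hMT)) le_rfl)
    _ = 5 * S := by ring
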